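/- Let q be a positive integer and let β₀, β₁, …, β_q : [0,1] → ℝ. Assume: (1) β₀ is non-decreasing on [0,1]; and (2) for every subset S ⊆ {1,…,q}, the function p ↦ β₀(p) + Σ_{j ∈ S} β_j(p) is non-decreasing on [0,1]. Then for any scalars z₁, …, z_q ∈ [0,1], the function p ↦ β₀(p) + Σ_{j=1}^{q} z_j β_j(p) is non-decreasing on [0,1]. In particular, the conclusion holds without requiring any individual slope function β_j (for j ≥ 1) to be non-decreasing. -/
import Mathlib


/-- QFOSR submodel: subset-sum monotonicity of the functional coefficients implies
the predicted quantile function is non-decreasing, without requiring any individual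
slope function to be non-decreasing. -/
theorem qfosr_monotone
    (q : ℕ) (hq : 0 < q)
    (β₀ : ℝ → ℝ) (β : Fin q → ℝ → ℝ)
    (h1 : MonotoneOn β₀ (Set.Icc (0:ℝ) 1))
    (h2 : ∀ S : Finset (Fin q),
      MonotoneOn (fun p => β₀ p + ∑ j ∈ S, β j p) (Set.Icc (0:ℝ) 1))
    (z : Fin q → ℝ) (hz : ∀ j, z j ∈ Set.Icc (0:ℝ) 1) :
    MonotoneOn (fun p => β₀ p + ∑ j, z j * β j p) (Set.Icc (0:ℝ) 1) := by
  intro a ha b hb hab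
  simp only
  set S : Finset (Fin q) := Finset.univ.filter (fun j => β j b - β j a < 0) with hSdef
  have hS := h2 S ha hb hab
  simp only at hS
  -- subset-sum bound
  have hS' : 0 ≤ (β₀ b - β₀ a) + ∑ j ∈ S, (β j b - β j a) := by
    rw [Finset.sum_sub_distrib]; linarith
  -- pointwise bound
  have hpt : ∀ j ∈ Finset.univ,
      (if β j b - β j a < 0 then β j b - β j a else 0) ≤ z j * (β j b - β j a) := by
    intro j _
    obtain ⟨hz0, hz1⟩ := hz j
    split
    · nlinarith
    · rename_i h; push_neg at h; nlinarith
  have hsum : ∑ j ∈ S, (β j b - β j a) ≤ ∑ j, z j * (β j b - β j a) := by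
    rw [hSdef, Finset.sum_filter]
    exact Finset.sum_le_sum hpt
  have heq : ∑ j, z j * (β j b - β j a) = ∑ j, z j * β j b - ∑ j, z j * β j a := by
    rw [← Finset.sum_sub_distrib]
    exact Finset.sum_congr rfl (fun j _ => by ring)
  rw [heq] at hsum
  linarith
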